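/- Let m₁ ≥ 1 and m₂ ≥ 0 be integers, ρ = m₁/2 + m₂, and assume either (m₂ = 0 and m₁ is odd), in which case set j = 1, or (m₁ is even and m₂ is odd), in which case set j = 2. Then: (a) for every λ₀ ∈ ℂ, the function c tends to 0 as λ → λ₀ along the punctured neighbourhood filter 𝓝[≠] λ₀ if and only if there exists k ∈ ℕ (k ≥ 0) with λ₀ = −(ρ + j·k); (b) at each such λ₀ = −(ρ + j·k) there exists a nonzero L ∈ ℂ such that c(λ)/(λ − λ₀) tends to L along 𝓝[≠] λ₀, i.e. the zero is simple. -/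

import Mathlib

open Set Filter Topology Finset

noncomputable section

/-- `ρ = m₁/2 + m₂`. -/
def rho (m₁ m₂ : ℕ) : ℝ := m₁ / 2 + m₂

/-- `g(μ) = Γ(μ)2^{−μ}/(Γ((m₁/2+1+μ)/2)Γ((m₁/2+m₂+μ)/2))`. -/
def gfun (m₁ m₂ : ℕ) (μ : ℂ) : ℂ :=
  Complex.Gamma μ * (2 : ℂ) ^ (-μ) /
    (Complex.Gamma (((m₁ : ℂ) / 2 + 1 + μ) / 2) *
      Complex.Gamma (((m₁ : ℂ) / 2 + (m₂ : ℂ) + μ) / 2))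

/-- The Harish-Chandra c-function, normalized so that `c(ρ) = 1`. -/
def cfun (m₁ m₂ : ℕ) (μ : ℂ) : ℂ := gfun m₁ m₂ μ / gfun m₁ m₂ ((rho m₁ m₂ : ℂ))

namespace CfunAux

/-- Local factorization: `f = (lam - z)^d * h` near `z`, `h` continuous nonvanishing. -/
def FacAt (f : ℂ → ℂ) (z : ℂ) (d : ℤ) : Prop :=
  ∃ h : ℂ → ℂ, ContinuousAt h z ∧ h z ≠ 0 ∧
    ∀ᶠ lam in 𝓝[≠] z, f lam = (lam - z) ^ d * h lam

lemma FacAt.of_continuousAt {f : ℂ → ℂ} {z : ℂ} (hc : ContinuousAt f z) (hnz : f z ≠ 0) :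
    FacAt f z 0 :=
  ⟨f, hc, hnz, by filter_upwards with lam; simp⟩

lemma FacAt.congr {f g : ℂ → ℂ} {z : ℂ} {d : ℤ} (hf : FacAt f z d)
    (hfg : ∀ lam, f lam = g lam) : FacAt g z d := by
  obtain ⟨h, hc, hnz, he⟩ := hf
  exact ⟨h, hc, hnz, by filter_upwards [he] with lam h1; rw [← hfg]; exact h1⟩

lemma FacAt.mul {f g : ℂ → ℂ} {z : ℂ} {d e : ℤ} (hf : FacAt f z d) (hg : FacAt g z e) :
    FacAt (fun lam => f lam * g lam) z (d + e) := by
  obtain ⟨hf1, hfc, hfnz, hfe⟩ := hf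
  obtain ⟨hg1, hgc, hgnz, hge⟩ := hg
  refine ⟨fun lam => hf1 lam * hg1 lam, hfc.mul hgc, mul_ne_zero hfnz hgnz, ?_⟩
  filter_upwards [hfe, hge, self_mem_nhdsWithin] with lam h1 h2 h3
  have hne : lam - z ≠ 0 := sub_ne_zero.mpr (by simpa using h3)
  rw [h1, h2, zpow_add₀ hne]; ring

lemma tendsto_pow_sub (z : ℂ) (n : ℕ) :
    Tendsto (fun lam : ℂ => (lam - z) ^ n) (𝓝[≠] z) (𝓝 ((0 : ℂ) ^ n)) := by
  have : Tendsto (fun lam : ℂ => (lam - z) ^ n) (𝓝 z) (𝓝 ((z - z) ^ n)) :=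
    ((continuous_id.sub continuous_const).pow n).continuousAt
  simpa [sub_self] using this.mono_left nhdsWithin_le_nhds

lemma FacAt.tendsto_zero {f : ℂ → ℂ} {z : ℂ} {d : ℤ} (hf : FacAt f z d) (hd : 1 ≤ d) :
    Tendsto f (𝓝[≠] z) (𝓝 0) := by
  obtain ⟨h, hc, hnz, he⟩ := hf
  have hdn : d = ((d.toNat : ℕ) : ℤ) := by omega
  have h0 : Tendsto (fun lam : ℂ => (lam - z) ^ d) (𝓝[≠] z) (𝓝 0) := by
    have := tendsto_pow_sub z d.toNat
    rw [zero_pow (by omega : d.toNat ≠ 0)] at this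
    refine this.congr fun lam => ?_
    rw [← zpow_natCast, ← hdn]
  have h1 : Tendsto (fun lam => (lam - z) ^ d * h lam) (𝓝[≠] z) (𝓝 (0 * h z)) :=
    h0.mul (hc.tendsto.mono_left nhdsWithin_le_nhds)
  rw [zero_mul] at h1
  exact h1.congr' (by filter_upwards [he] with lam h2 using h2.symm)

lemma FacAt.not_tendsto_zero {f : ℂ → ℂ} {z : ℂ} {d : ℤ} (hf : FacAt f z d) (hd : d ≤ 0) :
    ¬ Tendsto f (𝓝[≠] z) (𝓝 0) := by
  obtain ⟨h, hc, hnz, he⟩ := hf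
  intro hten
  set n : ℕ := (-d).toNat with hn
  have key : ∀ᶠ lam in 𝓝[≠] z, h lam = f lam * (lam - z) ^ n := by
    filter_upwards [he, self_mem_nhdsWithin] with lam h1 h2
    have hne : lam - z ≠ 0 := sub_ne_zero.mpr (by simpa using h2)
    have hzp : (lam - z) ^ d * (lam - z) ^ (n : ℤ) = 1 := by
      rw [← zpow_add₀ hne, (by omega : d + (n : ℤ) = 0), zpow_zero]
    rw [h1, mul_right_comm, ← zpow_natCast (lam - z) n, hzp, one_mul]
  have h2 : Tendsto (fun lam => f lam * (lam - z) ^ n) (𝓝[≠] z) (𝓝 (0 * (0 : ℂ) ^ n)) :=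
    hten.mul (tendsto_pow_sub z n)
  rw [zero_mul] at h2
  have h3 : Tendsto h (𝓝[≠] z) (𝓝 0) := h2.congr' (by filter_upwards [key] with lam h4 using h4.symm)
  have h5 : Tendsto h (𝓝[≠] z) (𝓝 (h z)) :=
    hc.tendsto.mono_left nhdsWithin_le_nhds
  exact hnz (tendsto_nhds_unique h5 h3)

lemma FacAt.simple {f : ℂ → ℂ} {z : ℂ} (hf : FacAt f z 1) :
    ∃ L : ℂ, L ≠ 0 ∧ Tendsto (fun lam => f lam / (lam - z)) (𝓝[≠] z) (𝓝 L) := by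
  obtain ⟨h, hc, hnz, he⟩ := hf
  refine ⟨h z, hnz, ?_⟩
  have h5 : Tendsto h (𝓝[≠] z) (𝓝 (h z)) :=
    hc.tendsto.mono_left nhdsWithin_le_nhds
  refine h5.congr' ?_
  filter_upwards [he, self_mem_nhdsWithin] with lam h1 h2
  have hne : lam - z ≠ 0 := sub_ne_zero.mpr (by simpa using h2)
  rw [h1]; field_simp

lemma Gamma_shift (N : ℕ) (s : ℂ) (hs : ∀ i : ℕ, i < N → s + i ≠ 0) :
    Complex.Gamma (s + N) = (∏ i ∈ Finset.range N, (s + i)) * Complex.Gamma s := by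
  induction N with
  | zero => simp
  | succ n ih =>
    have h1 : s + ((n + 1 : ℕ) : ℂ) = (s + n) + 1 := by push_cast; ring
    rw [h1, Complex.Gamma_add_one _ (hs n (by omega)), ih (fun i hi => hs i (by omega)),
      Finset.prod_range_succ]
    ring

lemma Gamma_shift_ne_zero (M : ℕ) (s : ℂ) (hs : ∀ i : ℕ, i < M → s + i ≠ 0)
    (hG : Complex.Gamma s ≠ 0) : Complex.Gamma (s + M) ≠ 0 := by
  rw [Gamma_shift M s hs]
  exact mul_ne_zero (Finset.prod_ne_zero_iff.mpr fun i hi => hs i (Finset.mem_range.mp hi)) hG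

lemma Gamma_inv_shift (M : ℕ) (s : ℂ) (hs : ∀ i : ℕ, i ≤ M → s + i ≠ 0)
    (hG : Complex.Gamma s ≠ 0) :
    (Complex.Gamma s)⁻¹ =
      (∏ i ∈ Finset.range (M + 1), (s + i)) / Complex.Gamma (s + ((M + 1 : ℕ) : ℂ)) := by
  have hs' : ∀ i : ℕ, i < M + 1 → s + i ≠ 0 := fun i hi => hs i (by omega)
  have hprod : (∏ i ∈ Finset.range (M + 1), (s + i)) ≠ 0 :=
    Finset.prod_ne_zero_iff.mpr fun i hi => hs' i (Finset.mem_range.mp hi)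
  have hshift := Gamma_shift (M + 1) s hs'
  rw [hshift]
  field_simp

lemma facGamma_reg (z : ℂ) (hz : ∀ N : ℕ, z ≠ -(N : ℂ)) : FacAt Complex.Gamma z 0 :=
  FacAt.of_continuousAt (Complex.differentiableAt_Gamma z hz).continuousAt
    (Complex.Gamma_ne_zero hz)

lemma facGamma_pole (N : ℕ) : FacAt Complex.Gamma (-(N : ℂ)) (-1) := by
  have hprodz : (∏ i ∈ Finset.range N, (-(N : ℂ) + i)) ≠ 0 := by
    refine Finset.prod_ne_zero_iff.mpr fun i hi => ?_
    intro h0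
    have hiN : (i : ℂ) = N := by linear_combination h0
    have : i = N := by exact_mod_cast hiN
    have := Finset.mem_range.mp hi; omega
  have hGone : Complex.Gamma (-(N : ℂ) + N + 1) ≠ 0 := by
    rw [show -(N : ℂ) + N + 1 = 1 by ring, Complex.Gamma_one]; exact one_ne_zero
  refine ⟨fun lam => Complex.Gamma (lam + N + 1) / ∏ i ∈ Finset.range N, (lam + i), ?_, ?_, ?_⟩
  · apply ContinuousAt.div
    · have hc1 : ContinuousAt (fun lam : ℂ => lam + N + 1) (-(N : ℂ)) := by fun_prop
      have hc2 : ContinuousAt Complex.Gamma (-(N : ℂ) + N + 1) := by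
        rw [show -(N : ℂ) + N + 1 = 1 by ring]
        refine (Complex.differentiableAt_Gamma 1 fun m h => ?_).continuousAt
        have : ((1 + m : ℕ) : ℂ) = 0 := by push_cast; linear_combination h
        have h2 : 1 + m = 0 := by exact_mod_cast this
        omega
      exact ContinuousAt.comp (g := Complex.Gamma)
        (f := fun lam : ℂ => lam + N + 1) (x := -(N : ℂ)) hc2 hc1
    · exact (continuous_finset_prod _ fun i _ =>
        continuous_id.add continuous_const).continuousAt
    · exact hprodz
  · show Complex.Gamma (-(N : ℂ) + N + 1) / (∏ i ∈ Finset.range N, (-(N : ℂ) + i)) ≠ 0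
    exact div_ne_zero hGone hprodz
  · have hev : ∀ᶠ lam : ℂ in 𝓝 (-(N : ℂ)), ∀ i ∈ Finset.range N, lam + (i : ℂ) ≠ 0 := by
      rw [eventually_all_finset]
      intro i hi
      refine ((continuous_id.add continuous_const).continuousAt).eventually_ne ?_
      intro h0
      simp only [Pi.add_apply, id_eq] at h0
      have hiN : (i : ℂ) = N := by linear_combination h0
      have : i = N := by exact_mod_cast hiN
      have := Finset.mem_range.mp hi; omega
    filter_upwards [hev.filter_mono nhdsWithin_le_nhds, self_mem_nhdsWithin] with lam h1 h2
    have hlam : lam ≠ -(N : ℂ) := by simpa using h2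
    have hall : ∀ i : ℕ, i < N + 1 → lam + i ≠ 0 := by
      intro i hi
      rcases Nat.lt_or_ge i N with h | h
      · exact h1 i (Finset.mem_range.mpr h)
      · have hiN : i = N := by omega
        subst hiN
        intro h0; exact hlam (by linear_combination h0)
    have hshift := Gamma_shift (N + 1) lam hall
    rw [Finset.prod_range_succ] at hshift
    have hprod : (∏ i ∈ Finset.range N, (lam + i)) ≠ 0 :=
      Finset.prod_ne_zero_iff.mpr fun i hi => h1 i hi
    have hNe : lam + N ≠ 0 := hall N (by omega)
    rw [show lam + ((N + 1 : ℕ) : ℂ) = lam + N + 1 by push_cast; ring] at hshift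
    rw [zpow_neg_one, show lam - -(N : ℂ) = lam + N by ring, hshift]
    field_simp

lemma facInv_reg (c z : ℂ) (hz : ∀ M : ℕ, (c + z) / 2 ≠ -(M : ℂ)) :
    FacAt (fun lam => (Complex.Gamma ((c + lam) / 2))⁻¹) z 0 := by
  apply FacAt.of_continuousAt
  · have h1 : Continuous fun lam : ℂ => (c + lam) / 2 := by fun_prop
    exact (Complex.differentiable_one_div_Gamma.continuous.comp h1).continuousAt
  · exact inv_ne_zero (Complex.Gamma_ne_zero hz)

lemma facInv_pole (c z : ℂ) (M : ℕ) (hM : (c + z) / 2 = -(M : ℂ)) :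
    FacAt (fun lam => (Complex.Gamma ((c + lam) / 2))⁻¹) z 1 := by
  have hone : (c + z) / 2 + M + 1 = 1 := by rw [hM]; ring
  have hGone : Complex.Gamma ((c + z) / 2 + M + 1) ≠ 0 := by
    rw [hone, Complex.Gamma_one]; exact one_ne_zero
  have hprodz : (∏ i ∈ Finset.range M, ((c + z) / 2 + i)) ≠ 0 := by
    refine Finset.prod_ne_zero_iff.mpr fun i hi => ?_
    rw [hM]
    intro h0
    have hiN : (i : ℂ) = M := by linear_combination h0
    have : i = M := by exact_mod_cast hiN
    have := Finset.mem_range.mp hi; omega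
  refine ⟨fun lam => (∏ i ∈ Finset.range M, ((c + lam) / 2 + i)) /
      (2 * Complex.Gamma ((c + lam) / 2 + M + 1)), ?_, ?_, ?_⟩
  · apply ContinuousAt.div
    · exact (continuous_finset_prod _ fun i _ => by fun_prop).continuousAt
    · refine continuousAt_const.mul ?_
      have hc1 : ContinuousAt (fun lam : ℂ => (c + lam) / 2 + M + 1) z := by fun_prop
      have hc2 : ContinuousAt Complex.Gamma ((c + z) / 2 + M + 1) := by
        rw [hone]
        refine (Complex.differentiableAt_Gamma 1 fun m h => ?_).continuousAt
        have : ((1 + m : ℕ) : ℂ) = 0 := by push_cast; linear_combination h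
        have h2 : 1 + m = 0 := by exact_mod_cast this
        omega
      exact ContinuousAt.comp (g := Complex.Gamma)
        (f := fun lam : ℂ => (c + lam) / 2 + M + 1) (x := z) hc2 hc1
    · exact mul_ne_zero two_ne_zero hGone
  · show (∏ i ∈ Finset.range M, ((c + z) / 2 + i)) /
        (2 * Complex.Gamma ((c + z) / 2 + M + 1)) ≠ 0
    exact div_ne_zero hprodz (mul_ne_zero two_ne_zero hGone)
  · have h0 : Tendsto (fun lam : ℂ => ‖(c + lam) / 2 + M‖) (𝓝 z) (𝓝 0) := by
      have hc : ContinuousAt (fun lam : ℂ => (c + lam) / 2 + M) z := by fun_prop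
      have := hc.tendsto
      rw [show (c + z) / 2 + (M : ℂ) = 0 by rw [hM]; ring] at this
      simpa using this.norm
    have hsmall : ∀ᶠ lam in 𝓝 z, ‖(c + lam) / 2 + M‖ < 1 / 2 :=
      h0.eventually_lt_const (by norm_num)
    have hfac : ∀ᶠ lam in 𝓝 z, ∀ i ∈ Finset.range M, (c + lam) / 2 + i ≠ 0 := by
      rw [eventually_all_finset]
      intro i hi
      refine (by fun_prop : ContinuousAt (fun lam : ℂ => (c + lam) / 2 + i) z).eventually_ne ?_
      rw [hM]
      intro h0'
      have hiN : (i : ℂ) = M := by linear_combination h0'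
      have : i = M := by exact_mod_cast hiN
      have := Finset.mem_range.mp hi; omega
    filter_upwards [hsmall.filter_mono nhdsWithin_le_nhds,
      hfac.filter_mono nhdsWithin_le_nhds, self_mem_nhdsWithin] with lam h1 h2 h3
    have hlam : lam ≠ z := by simpa using h3
    have hsM : (c + lam) / 2 + (M : ℂ) = (lam - z) / 2 := by linear_combination hM
    have hsM0 : (c + lam) / 2 + (M : ℂ) ≠ 0 := by
      rw [hsM]; exact div_ne_zero (sub_ne_zero.mpr hlam) two_ne_zero
    have hGs : Complex.Gamma ((c + lam) / 2) ≠ 0 := by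
      refine Complex.Gamma_ne_zero fun k hk => ?_
      rw [hk] at h1
      have hcast : (-(k : ℂ) + M) = (((M : ℝ) - k : ℝ) : ℂ) := by push_cast; ring
      rw [hcast, Complex.norm_real, Real.norm_eq_abs] at h1
      have hMk : M = k := by
        by_contra hne
        have hz1 : ((M : ℤ) - k) ≠ 0 := by omega
        have h1' : (1 : ℝ) ≤ |(M : ℝ) - k| := by
          have := Int.one_le_abs hz1
          calc (1 : ℝ) ≤ |((M : ℤ) - k : ℤ)| := by exact_mod_cast this
            _ = |(M : ℝ) - k| := by push_cast; ring_nf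
        linarith
      apply hlam
      subst hMk
      linear_combination 2 * hk - 2 * hM
    have hall : ∀ i : ℕ, i ≤ M → (c + lam) / 2 + i ≠ 0 := by
      intro i hi
      rcases Nat.lt_or_ge i M with h | h
      · exact h2 i (Finset.mem_range.mpr h)
      · have hiM : i = M := by omega
        subst hiM; exact hsM0
    have hGs1 : Complex.Gamma ((c + lam) / 2 + ((M + 1 : ℕ) : ℂ)) ≠ 0 :=
      Gamma_shift_ne_zero (M + 1) _ (fun i hi => hall i (by omega)) hGs
    have hinv := Gamma_inv_shift M ((c + lam) / 2) hall hGs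
    rw [hinv, Finset.prod_range_succ]
    rw [show (c + lam) / 2 + ((M + 1 : ℕ) : ℂ) = (c + lam) / 2 + M + 1 by push_cast; ring]
      at hGs1 ⊢
    rw [zpow_one, hsM]
    field_simp

lemma rho_cast (m₁ m₂ : ℕ) : ((rho m₁ m₂ : ℝ) : ℂ) = (m₁ : ℂ) / 2 + (m₂ : ℂ) := by
  unfold rho; push_cast; ring

lemma grho_ne_zero (m₁ m₂ : ℕ) (hm₁ : 1 ≤ m₁) : gfun m₁ m₂ ((rho m₁ m₂ : ℝ) : ℂ) ≠ 0 := by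
  have hm₁' : (1 : ℝ) ≤ m₁ := by exact_mod_cast hm₁
  have hm₂' : (0 : ℝ) ≤ m₂ := Nat.cast_nonneg m₂
  have hrho : (0 : ℝ) < rho m₁ m₂ := by unfold rho; linarith
  unfold gfun
  apply div_ne_zero
  · apply mul_ne_zero
    · apply Complex.Gamma_ne_zero_of_re_pos
      rw [Complex.ofReal_re]
      exact hrho
    · rw [Complex.cpow_def_of_ne_zero two_ne_zero]
      exact Complex.exp_ne_zero _
  · apply mul_ne_zero
    · apply Complex.Gamma_ne_zero_of_re_pos
      have he : ((m₁ : ℂ) / 2 + 1 + ((rho m₁ m₂ : ℝ) : ℂ)) / 2 =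
          ((((m₁ : ℝ) / 2 + 1 + rho m₁ m₂) / 2 : ℝ) : ℂ) := by push_cast; ring
      rw [he, Complex.ofReal_re]
      have : (0 : ℝ) < (m₁ : ℝ) / 2 + 1 + rho m₁ m₂ := by linarith
      linarith
    · apply Complex.Gamma_ne_zero_of_re_pos
      have he : ((m₁ : ℂ) / 2 + (m₂ : ℂ) + ((rho m₁ m₂ : ℝ) : ℂ)) / 2 =
          ((((m₁ : ℝ) / 2 + (m₂ : ℝ) + rho m₁ m₂) / 2 : ℝ) : ℂ) := by push_cast; ring
      rw [he, Complex.ofReal_re]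
      linarith

lemma cfun_eq (m₁ m₂ : ℕ) (lam : ℂ) :
    cfun m₁ m₂ lam = (gfun m₁ m₂ ((rho m₁ m₂ : ℝ) : ℂ))⁻¹ * ((2 : ℂ) ^ (-lam) *
      (Complex.Gamma lam * ((Complex.Gamma (((m₁ : ℂ) / 2 + 1 + lam) / 2))⁻¹ *
        (Complex.Gamma (((m₁ : ℂ) / 2 + (m₂ : ℂ) + lam) / 2))⁻¹))) := by
  have h : gfun m₁ m₂ lam = (2 : ℂ) ^ (-lam) *
      (Complex.Gamma lam * ((Complex.Gamma (((m₁ : ℂ) / 2 + 1 + lam) / 2))⁻¹ *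
        (Complex.Gamma (((m₁ : ℂ) / 2 + (m₂ : ℂ) + lam) / 2))⁻¹)) := by
    unfold gfun; rw [div_eq_mul_inv, mul_inv]; ring
  unfold cfun
  rw [h, div_eq_mul_inv]; ring

lemma facAt_cfun (m₁ m₂ : ℕ) (hm₁ : 1 ≤ m₁) (z : ℂ) (d1 d2 d3 : ℤ)
    (h1 : FacAt Complex.Gamma z d1)
    (h2 : FacAt (fun lam => (Complex.Gamma (((m₁ : ℂ) / 2 + 1 + lam) / 2))⁻¹) z d2)
    (h3 : FacAt (fun lam => (Complex.Gamma (((m₁ : ℂ) / 2 + (m₂ : ℂ) + lam) / 2))⁻¹) z d3) :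
    FacAt (cfun m₁ m₂) z (d1 + d2 + d3) := by
  have hK : FacAt (fun _ : ℂ => (gfun m₁ m₂ ((rho m₁ m₂ : ℝ) : ℂ))⁻¹) z 0 :=
    FacAt.of_continuousAt continuousAt_const (inv_ne_zero (grho_ne_zero m₁ m₂ hm₁))
  have hpow : FacAt (fun lam : ℂ => (2 : ℂ) ^ (-lam)) z 0 := by
    apply FacAt.of_continuousAt
    · exact ContinuousAt.comp (g := fun w : ℂ => (2 : ℂ) ^ w) (f := fun lam : ℂ => -lam)
        (x := z) (continuousAt_const_cpow two_ne_zero) (continuous_neg.continuousAt)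
    · rw [Complex.cpow_def_of_ne_zero two_ne_zero]
      exact Complex.exp_ne_zero _
  have h := hK.mul (hpow.mul (h1.mul (h2.mul h3)))
  rw [show (0 + (0 + (d1 + (d2 + d3)))) = d1 + d2 + d3 by ring] at h
  exact h.congr fun lam => (cfun_eq m₁ m₂ lam).symm

lemma case1_target (m₁ m₂ : ℕ) (hm₁ : 1 ≤ m₁) (hm₂ : m₂ = 0) (hodd : Odd m₁)
    (z : ℂ) (k : ℕ) (hz : z = -(((rho m₁ m₂ : ℝ) : ℂ) + (k : ℂ))) :
    FacAt (cfun m₁ m₂) z 1 := by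
  obtain ⟨t, ht⟩ := hodd
  have hm₂c : (m₂ : ℂ) = 0 := by rw [hm₂]; norm_num
  have hz' : z = -((m₁ : ℂ) / 2 + k) := by rw [hz, rho_cast, hm₂c]; ring
  have hG : FacAt Complex.Gamma z 0 := by
    apply facGamma_reg
    intro N hN
    have hc : ((m₁ + 2 * k : ℕ) : ℂ) = ((2 * N : ℕ) : ℂ) := by
      push_cast
      linear_combination 2 * hz' - 2 * hN
    have : m₁ + 2 * k = 2 * N := by exact_mod_cast hc
    omega
  rcases Nat.even_or_odd k with ⟨M, hM⟩ | ⟨M, hM⟩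
  · have hkc : (k : ℂ) = (M : ℂ) + M := by exact_mod_cast hM
    have hb : FacAt (fun lam => (Complex.Gamma (((m₁ : ℂ) / 2 + (m₂ : ℂ) + lam) / 2))⁻¹) z 1 := by
      refine facInv_pole _ _ M ?_
      rw [hz', hm₂c, hkc]; ring
    have ha : FacAt (fun lam => (Complex.Gamma (((m₁ : ℂ) / 2 + 1 + lam) / 2))⁻¹) z 0 := by
      apply facInv_reg
      intro M' hM'
      rw [hz'] at hM'
      have hc : ((1 + 2 * M' : ℕ) : ℂ) = ((k : ℕ) : ℂ) := by
        push_cast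
        linear_combination 2 * hM'
      have : 1 + 2 * M' = k := by exact_mod_cast hc
      omega
    have h := facAt_cfun m₁ m₂ hm₁ z 0 0 1 hG ha hb
    norm_num at h
    exact h
  · have hkc : (k : ℂ) = 2 * M + 1 := by exact_mod_cast hM
    have ha : FacAt (fun lam => (Complex.Gamma (((m₁ : ℂ) / 2 + 1 + lam) / 2))⁻¹) z 1 := by
      refine facInv_pole _ _ M ?_
      rw [hz', hkc]; ring
    have hb : FacAt (fun lam => (Complex.Gamma (((m₁ : ℂ) / 2 + (m₂ : ℂ) + lam) / 2))⁻¹) z 0 := by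
      apply facInv_reg
      intro M' hM'
      rw [hz', hm₂c] at hM'
      have hc : ((k : ℕ) : ℂ) = ((2 * M' : ℕ) : ℂ) := by
        push_cast
        linear_combination -2 * hM'
      have : k = 2 * M' := by exact_mod_cast hc
      omega
    have h := facAt_cfun m₁ m₂ hm₁ z 0 1 0 hG ha hb
    norm_num at h
    exact h

lemma case2_target (m₁ m₂ : ℕ) (hm₁ : 1 ≤ m₁) (heven : Even m₁) (hodd : Odd m₂)
    (z : ℂ) (k : ℕ) (hz : z = -(((rho m₁ m₂ : ℝ) : ℂ) + 2 * (k : ℂ))) :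
    FacAt (cfun m₁ m₂) z 1 := by
  obtain ⟨n, hn⟩ := heven
  obtain ⟨t, ht⟩ := hodd
  have hm₁c : (m₁ : ℂ) = (n : ℂ) + n := by exact_mod_cast hn
  have hm₂c : (m₂ : ℂ) = 2 * (t : ℂ) + 1 := by exact_mod_cast ht
  have hz' : z = -((n : ℂ) + m₂ + 2 * k) := by rw [hz, rho_cast, hm₁c]; ring
  have hG : FacAt Complex.Gamma z (-1) := by
    have hp := facGamma_pole (n + m₂ + 2 * k)
    have he : -(((n + m₂ + 2 * k : ℕ) : ℕ) : ℂ) = z := by rw [hz']; push_cast; ring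
    rwa [he] at hp
  have ha : FacAt (fun lam => (Complex.Gamma (((m₁ : ℂ) / 2 + 1 + lam) / 2))⁻¹) z 1 := by
    refine facInv_pole _ _ (t + k) ?_
    rw [hz', hm₁c, hm₂c]; push_cast; ring
  have hb : FacAt (fun lam => (Complex.Gamma (((m₁ : ℂ) / 2 + (m₂ : ℂ) + lam) / 2))⁻¹) z 1 := by
    refine facInv_pole _ _ k ?_
    rw [hz', hm₁c]; ring
  have h := facAt_cfun m₁ m₂ hm₁ z (-1) 1 1 hG ha hb
  norm_num at h
  exact h

lemma case1_forward (m₁ m₂ : ℕ) (hm₁ : 1 ≤ m₁) (hm₂ : m₂ = 0) (hodd : Odd m₁)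
    (lam₀ : ℂ) (h : ∀ k : ℕ, lam₀ ≠ -(((rho m₁ m₂ : ℝ) : ℂ) + (k : ℂ))) :
    ∃ d : ℤ, d ≤ 0 ∧ FacAt (cfun m₁ m₂) lam₀ d := by
  have hm₂c : (m₂ : ℂ) = 0 := by rw [hm₂]; norm_num
  have hrc : ((rho m₁ m₂ : ℝ) : ℂ) = (m₁ : ℂ) / 2 := by rw [rho_cast, hm₂c]; ring
  have hPA : ∀ M : ℕ, ((m₁ : ℂ) / 2 + 1 + lam₀) / 2 ≠ -(M : ℂ) := by
    intro M hM
    apply h (2 * M + 1)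
    rw [hrc]; push_cast
    linear_combination 2 * hM
  have hPB : ∀ M : ℕ, ((m₁ : ℂ) / 2 + (m₂ : ℂ) + lam₀) / 2 ≠ -(M : ℂ) := by
    intro M hM
    apply h (2 * M)
    rw [hm₂c] at hM
    rw [hrc]; push_cast
    linear_combination 2 * hM
  have ha := facInv_reg ((m₁ : ℂ) / 2 + 1) lam₀ hPA
  have hb := facInv_reg ((m₁ : ℂ) / 2 + (m₂ : ℂ)) lam₀ hPB
  by_cases hPG : ∃ N : ℕ, lam₀ = -(N : ℂ)
  · obtain ⟨N, hN⟩ := hPG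
    refine ⟨-1 + 0 + 0, by norm_num, facAt_cfun m₁ m₂ hm₁ lam₀ (-1) 0 0 ?_ ha hb⟩
    rw [hN]; exact facGamma_pole N
  · push_neg at hPG
    exact ⟨0 + 0 + 0, by norm_num, facAt_cfun m₁ m₂ hm₁ lam₀ 0 0 0 (facGamma_reg _ hPG) ha hb⟩

lemma case2_forward (m₁ m₂ : ℕ) (hm₁ : 1 ≤ m₁) (heven : Even m₁) (hodd : Odd m₂)
    (lam₀ : ℂ) (h : ∀ k : ℕ, lam₀ ≠ -(((rho m₁ m₂ : ℝ) : ℂ) + 2 * (k : ℂ))) :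
    ∃ d : ℤ, d ≤ 0 ∧ FacAt (cfun m₁ m₂) lam₀ d := by
  obtain ⟨n, hn⟩ := heven
  have hm₁c : (m₁ : ℂ) = (n : ℂ) + n := by exact_mod_cast hn
  have hrc : ((rho m₁ m₂ : ℝ) : ℂ) = (n : ℂ) + (m₂ : ℂ) := by rw [rho_cast, hm₁c]; ring
  have hPB : ∀ M : ℕ, ((m₁ : ℂ) / 2 + (m₂ : ℂ) + lam₀) / 2 ≠ -(M : ℂ) := by
    intro M hM
    apply h M
    rw [hm₁c] at hM
    rw [hrc]
    linear_combination 2 * hM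
  have hb := facInv_reg ((m₁ : ℂ) / 2 + (m₂ : ℂ)) lam₀ hPB
  by_cases hPA : ∃ M : ℕ, ((m₁ : ℂ) / 2 + 1 + lam₀) / 2 = -(M : ℂ)
  · obtain ⟨M, hM⟩ := hPA
    have hG : FacAt Complex.Gamma lam₀ (-1) := by
      have hp := facGamma_pole (n + 1 + 2 * M)
      have he : -(((n + 1 + 2 * M : ℕ) : ℕ) : ℂ) = lam₀ := by
        push_cast
        rw [hm₁c] at hM
        linear_combination -2 * hM
      rwa [he] at hp
    have ha : FacAt (fun lam => (Complex.Gamma (((m₁ : ℂ) / 2 + 1 + lam) / 2))⁻¹) lam₀ 1 :=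
      facInv_pole _ _ M hM
    exact ⟨-1 + 1 + 0, by norm_num, facAt_cfun m₁ m₂ hm₁ lam₀ (-1) 1 0 hG ha hb⟩
  · push_neg at hPA
    have ha := facInv_reg ((m₁ : ℂ) / 2 + 1) lam₀ hPA
    by_cases hPG : ∃ N : ℕ, lam₀ = -(N : ℂ)
    · obtain ⟨N, hN⟩ := hPG
      refine ⟨-1 + 0 + 0, by norm_num, facAt_cfun m₁ m₂ hm₁ lam₀ (-1) 0 0 ?_ ha hb⟩
      rw [hN]; exact facGamma_pole N
    · push_neg at hPG
      exact ⟨0 + 0 + 0, by norm_num, facAt_cfun m₁ m₂ hm₁ lam₀ 0 0 0 (facGamma_reg _ hPG) ha hb⟩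

end CfunAux

open CfunAux

theorem cfun_zeros (m₁ m₂ : ℕ) (hm₁ : 1 ≤ m₁) (j : ℕ)
    (hcase : (m₂ = 0 ∧ Odd m₁ ∧ j = 1) ∨ (Even m₁ ∧ Odd m₂ ∧ j = 2)) :
    (∀ lam₀ : ℂ,
      Filter.Tendsto (cfun m₁ m₂) (nhdsWithin lam₀ {lam₀}ᶜ) (nhds 0)
        ↔ ∃ k : ℕ, lam₀ = -((rho m₁ m₂ : ℂ) + (j : ℂ) * (k : ℂ))) ∧
    ∀ k : ℕ, ∃ L : ℂ, L ≠ 0 ∧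
      Filter.Tendsto
        (fun lam : ℂ =>
          cfun m₁ m₂ lam / (lam - (-((rho m₁ m₂ : ℂ) + (j : ℂ) * (k : ℂ)))))
        (nhdsWithin (-((rho m₁ m₂ : ℂ) + (j : ℂ) * (k : ℂ)))
          {(-((rho m₁ m₂ : ℂ) + (j : ℂ) * (k : ℂ)))}ᶜ) (nhds L) := by
  obtain ⟨hm₂, hodd, hj⟩ | ⟨heven, hodd, hj⟩ := hcase
  · constructor
    · intro lam₀
      constructor
      · intro hten
        by_contra hnex
        push_neg at hnex
        have h : ∀ k : ℕ, lam₀ ≠ -(((rho m₁ m₂ : ℝ) : ℂ) + (k : ℂ)) := by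
          intro k hk
          exact hnex k (by rw [hk, hj]; push_cast; ring)
        obtain ⟨d, hd, hfac⟩ := case1_forward m₁ m₂ hm₁ hm₂ hodd lam₀ h
        exact hfac.not_tendsto_zero hd hten
      · rintro ⟨k, hk⟩
        exact (case1_target m₁ m₂ hm₁ hm₂ hodd lam₀ k
          (by rw [hk, hj]; push_cast; ring)).tendsto_zero le_rfl
    · intro k
      exact (case1_target m₁ m₂ hm₁ hm₂ hodd _ k (by rw [hj]; push_cast; ring)).simple
  · constructor
    · intro lam₀
      constructor
      · intro hten
        by_contra hnex
        push_neg at hnex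
        have h : ∀ k : ℕ, lam₀ ≠ -(((rho m₁ m₂ : ℝ) : ℂ) + 2 * (k : ℂ)) := by
          intro k hk
          exact hnex k (by rw [hk, hj]; push_cast; ring)
        obtain ⟨d, hd, hfac⟩ := case2_forward m₁ m₂ hm₁ heven hodd lam₀ h
        exact hfac.not_tendsto_zero hd hten
      · rintro ⟨k, hk⟩
        exact (case2_target m₁ m₂ hm₁ heven hodd lam₀ k
          (by rw [hk, hj]; push_cast; ring)).tendsto_zero le_rfl
    · intro k
      exact (case2_target m₁ m₂ hm₁ heven hodd _ k (by rw [hj]; push_cast; ring)).simple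

end
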